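/- arXiv:1005.5152 — 4 statements merged into one kernel-verified Lean document; each statement's English description precedes it below -/
import Mathlib

section
/- Let 𝒜 be an additive category and let u : X → Y, u' : X' → Y' be chain maps of cochain complexes over 𝒜, and f : X → X', g : Y → Y' chain maps admitting at least one good map Cone(u) → Cone(u') relative to (f,g). Suppose that for every chain map β : X⟦1⟧ → Y', the composite β ∘ w : Cone(u) → Y' is null-homotopic, where w : Cone(u) → X⟦1⟧ is the canonical projection. Then any two chain maps Cone(u) → Cone(u') that are good relative to (f, g) are chain homotopic. -/
open CategoryTheory Category Limits

namespace ForPaper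

variable {𝒜 : Type*} [Category 𝒜] [Preadditive 𝒜] [HasBinaryBiproducts 𝒜]

/-- The mapping cone of a chain map `u : X ⟶ Y` of cochain complexes:
`Cone(u)ⁿ = Xⁿ⁺¹ ⊞ Yⁿ` with differential `[[-d_X, 0], [u, d_Y]]`. -/
noncomputable def cone {X Y : CochainComplex 𝒜 ℤ} (u : X ⟶ Y) : CochainComplex 𝒜 ℤ :=
  CochainComplex.of (fun n => X.X (n + 1) ⊞ Y.X n)
    (fun n => biprod.desc (biprod.lift (-X.d (n + 1) (n + 1 + 1)) (u.f (n + 1)))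
      (biprod.lift 0 (Y.d n (n + 1))))
    (fun n => by
      apply biprod.hom_ext' <;> apply biprod.hom_ext <;>
        simp [u.comm (n + 1) (n + 1 + 1)])

@[simp]
lemma cone_d {X Y : CochainComplex 𝒜 ℤ} (u : X ⟶ Y) (n : ℤ) :
    (cone u).d n (n + 1) = biprod.desc
      (biprod.lift (-X.d (n + 1) (n + 1 + 1)) (u.f (n + 1)))
      (biprod.lift 0 (Y.d n (n + 1))) := by
  simp [cone]

/-- The canonical inclusion `Y ⟶ Cone(u)`. -/
noncomputable def coneIn {X Y : CochainComplex 𝒜 ℤ} (u : X ⟶ Y) : Y ⟶ cone u where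
  f n := biprod.inr
  comm' := by
    rintro i j (rfl : i + 1 = j)
    apply biprod.hom_ext <;> simp [cone]

/-- The canonical projection `Cone(u) ⟶ X⟦1⟧`. -/
noncomputable def coneOut {X Y : CochainComplex 𝒜 ℤ} (u : X ⟶ Y) :
    cone u ⟶ (X⟦(1 : ℤ)⟧) where
  f n := biprod.fst
  comm' := by
    rintro i j (rfl : i + 1 = j)
    apply biprod.hom_ext' <;> simp [cone]

/-- A chain map `h : Cone(u) ⟶ Cone(u')` is *good* relative to the pair `(f, g)` if
in each degree it is given by a matrix `[[f, 0], [α, g]]` for some family of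
morphisms `α n : Xⁿ⁺¹ ⟶ Y'ⁿ`. -/
def IsGood {X Y X' Y' : CochainComplex 𝒜 ℤ} (u : X ⟶ Y) (u' : X' ⟶ Y')
    (f : X ⟶ X') (g : Y ⟶ Y') (h : cone u ⟶ cone u') : Prop :=
  ∃ α : ∀ n : ℤ, X.X (n + 1) ⟶ Y'.X n,
    ∀ n : ℤ, h.f n =
      biprod.desc (biprod.lift (f.f (n + 1)) (α n)) (biprod.lift 0 (g.f n))

end ForPaper

open ForPaper

/-- If every composite `Cone(u) ⟶ X⟦1⟧ ⟶ Y'` with the canonical projection is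
null-homotopic, then any two chain maps `Cone(u) ⟶ Cone(u')` which are good relative to
the same pair `(f, g)` (assumed to admit at least one good map) are chain homotopic. -/
theorem statement_5 {𝒜 : Type*} [Category 𝒜] [Preadditive 𝒜] [HasBinaryBiproducts 𝒜]
    {X Y X' Y' : CochainComplex 𝒜 ℤ} (u : X ⟶ Y) (u' : X' ⟶ Y')
    (f : X ⟶ X') (g : Y ⟶ Y')
    (hexists : ∃ h₀ : cone u ⟶ cone u', IsGood u u' f g h₀)
    (hvanish : ∀ β : (X⟦(1 : ℤ)⟧) ⟶ Y', Nonempty (Homotopy (coneOut u ≫ β) 0)) :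
    ∀ h₁ h₂ : cone u ⟶ cone u', IsGood u u' f g h₁ → IsGood u u' f g h₂ →
      Nonempty (Homotopy h₁ h₂) := by
  rintro h₁ h₂ ⟨α₁, hα₁⟩ ⟨α₂, hα₂⟩
  have key : ∀ n : ℤ, (α₁ n - α₂ n) ≫ Y'.d n (n + 1)
      = (-X.d (n + 1) (n + 1 + 1)) ≫ (α₁ (n+1) - α₂ (n+1)) := by
    intro n
    have c₁ := h₁.comm n (n+1)
    have c₂ := h₂.comm n (n+1)
    rw [hα₁ n, hα₁ (n+1)] at c₁
    rw [hα₂ n, hα₂ (n+1)] at c₂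
    have e₁ := biprod.inl ≫= c₁ =≫ biprod.snd
    have e₂ := biprod.inl ≫= c₂ =≫ biprod.snd
    simp [cone] at e₁ e₂
    calc (α₁ n - α₂ n) ≫ Y'.d n (n + 1)
        = (f.f (n + 1) ≫ u'.f (n + 1) + α₁ n ≫ Y'.d n (n + 1))
          - (f.f (n + 1) ≫ u'.f (n + 1) + α₂ n ≫ Y'.d n (n + 1)) := by
          rw [Preadditive.sub_comp]; abel
      _ = (-X.d (n + 1) (n + 1 + 1) ≫ α₁ (n + 1) + u.f (n + 1) ≫ g.f (n + 1))
          - (-X.d (n + 1) (n + 1 + 1) ≫ α₂ (n + 1) + u.f (n + 1) ≫ g.f (n + 1)) := by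
          rw [e₁, e₂]
      _ = (-X.d (n + 1) (n + 1 + 1)) ≫ (α₁ (n + 1) - α₂ (n + 1)) := by
          simp only [Preadditive.comp_sub, Preadditive.neg_comp]; abel
  let β : (X⟦(1:ℤ)⟧) ⟶ Y' :=
    { f := fun n => α₁ n - α₂ n
      comm' := by
        rintro i j (rfl : i + 1 = j)
        simpa [CochainComplex.shiftFunctor_obj_d'] using key i }
  have hfac : coneOut u ≫ β ≫ coneIn u' = h₁ - h₂ := by
    ext n
    simp only [HomologicalComplex.comp_f, HomologicalComplex.sub_f_apply,
      coneOut, coneIn, hα₁ n, hα₂ n]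
    dsimp [cone, CochainComplex.of]
    apply biprod.hom_ext' <;> apply biprod.hom_ext <;> (erw [Preadditive.comp_sub, Preadditive.sub_comp]; simp [β])
  obtain ⟨H⟩ := hvanish β
  refine ⟨Homotopy.equivSubZero.symm ?_⟩
  have H2 : Homotopy ((coneOut u ≫ β) ≫ coneIn u') (0 ≫ coneIn u') := H.compRight _
  exact (Homotopy.ofEq (by rw [← hfac, Category.assoc])).trans
    (H2.trans (Homotopy.ofEq (Limits.zero_comp)))
end

section
/- Let 𝒜 be an additive category and let u : X → Y, u' : X' → Y' be chain maps of cochain complexes over 𝒜, and f : X → X', g : Y → Y' chain maps. Suppose there exists a chain map φ : Y → X' such that f is chain homotopic to φ ∘ u and g is chain homotopic to u' ∘ φ. Then there exists a chain map h : Cone(u) → Cone(u') that is good relative to (f, g) and is null-homotopic. -/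
open CategoryTheory Category Limits

open ForPaper

/-- If the square `(f, g)` is null-homotopic in the sense that there is a chain map
`φ : Y ⟶ X'` with `f` homotopic to `φ ∘ u` and `g` homotopic to `u' ∘ φ`, then there
is a good map `Cone(u) ⟶ Cone(u')` relative to `(f, g)` which is null-homotopic. -/
theorem statement_6 {𝒜 : Type*} [Category 𝒜] [Preadditive 𝒜] [HasBinaryBiproducts 𝒜]
    {X Y X' Y' : CochainComplex 𝒜 ℤ} (u : X ⟶ Y) (u' : X' ⟶ Y')
    (f : X ⟶ X') (g : Y ⟶ Y') (φ : Y ⟶ X')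
    (hf : Nonempty (Homotopy f (u ≫ φ))) (hg : Nonempty (Homotopy g (φ ≫ u'))) :
    ∃ h : cone u ⟶ cone u', IsGood u u' f g h ∧ Nonempty (Homotopy h 0) := by
  obtain ⟨K⟩ := hf
  obtain ⟨L⟩ := hg
  -- The null homotopy components
  let s : ∀ i j, (ComplexShape.up ℤ).Rel j i → ((cone u).X i ⟶ (cone u').X j) :=
    fun i j hij => by
      have h' : j + 1 = i := hij
      subst h'
      exact biprod.desc (biprod.lift (-K.hom (j + 1 + 1) (j + 1)) 0)
        (biprod.lift (φ.f (j + 1)) (L.hom (j + 1) j))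
  have hs1 : ∀ (j i : ℤ) (hij : (ComplexShape.up ℤ).Rel j (j + 1)), s (j + 1) j hij =
      biprod.desc (biprod.lift (-K.hom (j + 1 + 1) (j + 1)) 0)
        (biprod.lift (φ.f (j + 1)) (L.hom (j + 1) j)) := fun j i hij => rfl
  refine ⟨Homotopy.nullHomotopicMap' s, ⟨fun n =>
      -(K.hom (n + 1) n ≫ u'.f n) + u.f (n + 1) ≫ L.hom (n + 1) n,
      fun n => ?_⟩, ⟨Homotopy.nullHomotopy' s⟩⟩
  obtain ⟨m, rfl⟩ : ∃ m, n = m + 1 := ⟨n - 1, by ring⟩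
  rw [Homotopy.nullHomotopicMap'_f
    (show (ComplexShape.up ℤ).Rel m (m + 1) from rfl)
    (show (ComplexShape.up ℤ).Rel (m + 1) (m + 1 + 1) from rfl),
    hs1 (m + 1) 0 rfl, hs1 m 0 rfl]
  have hK := K.comm (m + 1 + 1)
  rw [dNext_eq K.hom (show (ComplexShape.up ℤ).Rel (m + 1 + 1) (m + 1 + 1 + 1) from rfl),
    prevD_eq K.hom (show (ComplexShape.up ℤ).Rel (m + 1) (m + 1 + 1) from rfl)] at hK
  have hL := L.comm (m + 1)
  rw [dNext_eq L.hom (show (ComplexShape.up ℤ).Rel (m + 1) (m + 1 + 1) from rfl),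
    prevD_eq L.hom (show (ComplexShape.up ℤ).Rel m (m + 1) from rfl)] at hL
  have hφ := φ.comm (m + 1) (m + 1 + 1)
  rw [cone_d, cone_d]
  unfold cone
  apply biprod.hom_ext' <;> apply biprod.hom_ext <;>
    simp only [cone_d, biprod.inl_desc_assoc, biprod.inr_desc_assoc, biprod.lift_desc,
      biprod.lift_fst, biprod.lift_snd, Preadditive.add_comp, Preadditive.comp_add,
      Preadditive.neg_comp, Preadditive.comp_neg, Category.assoc, biprod.inl_desc,
      biprod.inr_desc, zero_comp, comp_zero, neg_neg, add_zero, zero_add,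
      HomologicalComplex.comp_f, hK, hL, ← hφ] <;>
    abel
end

section
/- Let 𝒜 be an additive category and let u : X → Y, u' : X' → Y' be chain maps of cochain complexes over 𝒜, and f : X → X', g : Y → Y' chain maps. Suppose some chain map h : Cone(u) → Cone(u') that is good relative to (f, g) is null-homotopic. Then there exists a chain map φ : Y → X' such that f is chain homotopic to φ ∘ u and g is chain homotopic to u' ∘ φ. -/
open CategoryTheory Category Limits

namespace ForPaper

variable {𝒜 : Type*} [Category 𝒜] [Preadditive 𝒜] [HasBinaryBiproducts 𝒜]

set_option linter.unusedSectionVars false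

section Components

variable {X Y X' Y' : CochainComplex 𝒜 ℤ} {u : X ⟶ Y} {u' : X' ⟶ Y'} {h : cone u ⟶ cone u'}

noncomputable def aH (H : Homotopy h 0) (m : ℤ) : X.X (m + 1 + 1) ⟶ X'.X (m + 1) :=
  biprod.inl ≫ H.hom (m + 1) m ≫ biprod.fst

noncomputable def pH (H : Homotopy h 0) (m : ℤ) : Y.X (m + 1) ⟶ X'.X (m + 1) :=
  biprod.inr ≫ H.hom (m + 1) m ≫ biprod.fst

noncomputable def tH (H : Homotopy h 0) (m : ℤ) : Y.X (m + 1) ⟶ Y'.X m :=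
  biprod.inr ≫ H.hom (m + 1) m ≫ biprod.snd

lemma aH_cast (H : Homotopy h 0) {m m' : ℤ} (e : m = m') :
    aH H m = eqToHom (by rw [e]) ≫ aH H m' ≫ eqToHom (by rw [e]) := by subst e; simp

lemma pH_cast (H : Homotopy h 0) {m m' : ℤ} (e : m = m') :
    pH H m = eqToHom (by rw [e]) ≫ pH H m' ≫ eqToHom (by rw [e]) := by subst e; simp

lemma tH_cast (H : Homotopy h 0) {m m' : ℤ} (e : m = m') :
    tH H m = eqToHom (by rw [e]) ≫ tH H m' ≫ eqToHom (by rw [e]) := by subst e; simp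

lemma d_cast (C : CochainComplex 𝒜 ℤ) {i i' j j' : ℤ} (hi : i = i') (hj : j = j') :
    C.d i j = eqToHom (by rw [hi]) ≫ C.d i' j' ≫ eqToHom (by rw [hj]) := by
  subst hi; subst hj; simp

lemma f_cast {C D : CochainComplex 𝒜 ℤ} (ψ : C ⟶ D) {i i' : ℤ} (e : i = i') :
    ψ.f i = eqToHom (by rw [e]) ≫ ψ.f i' ≫ eqToHom (by rw [e]) := by subst e; simp

lemma main_eq (H : Homotopy h 0) (m : ℤ) :
    h.f (m + 1) = (cone u).d (m + 1) (m + 1 + 1) ≫ H.hom (m + 1 + 1) (m + 1) +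
      H.hom (m + 1) m ≫ (cone u').d m (m + 1) := by
  have := H.comm (m + 1)
  rw [dNext_eq H.hom (show (ComplexShape.up ℤ).Rel (m + 1) (m + 1 + 1) from rfl),
      prevD_eq H.hom (show (ComplexShape.up ℤ).Rel m (m + 1) from rfl)] at this
  simpa using this



noncomputable def Kh (H : Homotopy h 0) (i j : ℤ) :
    X.X (i + 1) ⊞ Y.X i ⟶ X'.X (j + 1) ⊞ Y'.X j := H.hom i j

lemma aH_K (H : Homotopy h 0) (m : ℤ) : aH H m = biprod.inl ≫ Kh H (m + 1) m ≫ biprod.fst := rfl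

lemma pH_K (H : Homotopy h 0) (m : ℤ) : pH H m = biprod.inr ≫ Kh H (m + 1) m ≫ biprod.fst := rfl

lemma tH_K (H : Homotopy h 0) (m : ℤ) : tH H m = biprod.inr ≫ Kh H (m + 1) m ≫ biprod.snd := rfl

lemma main_eq' (H : Homotopy h 0) (m : ℤ) :
    @Eq (X.X (m+1+1) ⊞ Y.X (m+1) ⟶ X'.X (m+1+1) ⊞ Y'.X (m+1)) (h.f (m + 1))
      (biprod.desc (biprod.lift (-X.d (m+1+1) (m+1+1+1)) (u.f (m+1+1)))
          (biprod.lift 0 (Y.d (m+1) (m+1+1))) ≫ Kh H (m+1+1) (m+1) +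
        Kh H (m+1) m ≫ biprod.desc (biprod.lift (-X'.d (m+1) (m+1+1)) (u'.f (m+1)))
            (biprod.lift 0 (Y'.d m (m+1)))) := by
  have := main_eq H m
  rw [cone_d, cone_d] at this
  exact this

lemma eI (H : Homotopy h 0) {f : X ⟶ X'} {g : Y ⟶ Y'} (α : ∀ n : ℤ, X.X (n+1) ⟶ Y'.X n)
    (hα : ∀ n : ℤ, h.f n = biprod.desc (biprod.lift (f.f (n+1)) (α n)) (biprod.lift 0 (g.f n))) (m : ℤ) :
    f.f (m+1+1) = -(X.d (m+1+1) (m+1+1+1) ≫ aH H (m+1)) + u.f (m+1+1) ≫ pH H (m+1)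
      - aH H m ≫ X'.d (m+1) (m+1+1) := by
  have e := congrArg (fun w => biprod.inl ≫ w ≫ biprod.fst) (main_eq' H m)
  simp only [hα] at e
  simp only [cone_d, biprod.lift_eq, biprod.desc_eq] at e
  simp only [aH_K, pH_K, tH_K]
  simp [Preadditive.add_comp, Preadditive.comp_add, Preadditive.sub_comp, Preadditive.comp_sub, Preadditive.neg_comp, Preadditive.comp_neg, assoc] at e ⊢
  rw [e]; abel

lemma eIII (H : Homotopy h 0) {f : X ⟶ X'} {g : Y ⟶ Y'} (α : ∀ n : ℤ, X.X (n+1) ⟶ Y'.X n)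
    (hα : ∀ n : ℤ, h.f n = biprod.desc (biprod.lift (f.f (n+1)) (α n)) (biprod.lift 0 (g.f n))) (m : ℤ) :
    pH H m ≫ X'.d (m+1) (m+1+1) = Y.d (m+1) (m+1+1) ≫ pH H (m+1) := by
  have e := congrArg (fun w => biprod.inr ≫ w ≫ biprod.fst) (main_eq' H m)
  simp only [hα] at e
  simp only [cone_d, biprod.lift_eq, biprod.desc_eq] at e
  simp only [pH_K]
  simp [Preadditive.add_comp, Preadditive.comp_add, Preadditive.sub_comp, Preadditive.comp_sub, Preadditive.neg_comp, Preadditive.comp_neg, assoc] at e ⊢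
  rw [← sub_eq_zero] at e ⊢
  rw [← e]; abel

lemma eIV (H : Homotopy h 0) {f : X ⟶ X'} {g : Y ⟶ Y'} (α : ∀ n : ℤ, X.X (n+1) ⟶ Y'.X n)
    (hα : ∀ n : ℤ, h.f n = biprod.desc (biprod.lift (f.f (n+1)) (α n)) (biprod.lift 0 (g.f n))) (m : ℤ) :
    g.f (m+1) = Y.d (m+1) (m+1+1) ≫ tH H (m+1) + pH H m ≫ u'.f (m+1) + tH H m ≫ Y'.d m (m+1) := by
  have e := congrArg (fun w => biprod.inr ≫ w ≫ biprod.snd) (main_eq' H m)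
  simp only [hα] at e
  simp only [cone_d, biprod.lift_eq, biprod.desc_eq] at e
  simp only [pH_K, tH_K]
  simp [Preadditive.add_comp, Preadditive.comp_add, Preadditive.sub_comp, Preadditive.comp_sub, Preadditive.neg_comp, Preadditive.comp_neg, assoc] at e ⊢
  rw [e]; abel

noncomputable def phi (H : Homotopy h 0) {f : X ⟶ X'} {g : Y ⟶ Y'} (α : ∀ n : ℤ, X.X (n+1) ⟶ Y'.X n)
    (hα : ∀ n : ℤ, h.f n = biprod.desc (biprod.lift (f.f (n+1)) (α n)) (biprod.lift 0 (g.f n))) :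
    Y ⟶ X' where
  f n := eqToHom (congrArg Y.X (show n = n - 1 + 1 by omega)) ≫ pH H (n-1) ≫
    eqToHom (congrArg X'.X (show n - 1 + 1 = n by omega))
  comm' := by
    rintro i j (rfl : i + 1 = j)
    obtain ⟨m, rfl⟩ : ∃ m, i = m + 1 := ⟨i - 1, by omega⟩
    beta_reduce
    rw [pH_cast H (show m+1-1 = m by omega), pH_cast H (show m+1+1-1 = m+1 by omega)]
    simp only [assoc, eqToHom_trans, eqToHom_trans_assoc, eqToHom_refl, id_comp, comp_id]
    simpa using eIII H α hα m

noncomputable def homotopyF (H : Homotopy h 0) {f : X ⟶ X'} {g : Y ⟶ Y'}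
    (α : ∀ n : ℤ, X.X (n+1) ⟶ Y'.X n)
    (hα : ∀ n : ℤ, h.f n = biprod.desc (biprod.lift (f.f (n+1)) (α n)) (biprod.lift 0 (g.f n))) :
    Homotopy f (u ≫ phi H α hα) where
  hom i j := if e : j + 1 = i then
      eqToHom (congrArg X.X (show i = j - 1 + 1 + 1 by omega)) ≫ (-(aH H (j-1))) ≫
        eqToHom (congrArg X'.X (show j - 1 + 1 = j by omega))
    else 0
  zero i j w := dif_neg w
  comm i := by
    obtain ⟨m, rfl⟩ : ∃ m, i = m + 1 + 1 := ⟨i - 1 - 1, by omega⟩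
    rw [dNext_eq _ (show (ComplexShape.up ℤ).Rel (m+1+1) (m+1+1+1) from rfl),
        prevD_eq _ (show (ComplexShape.up ℤ).Rel (m+1) (m+1+1) from rfl)]
    rw [dif_pos rfl, dif_pos rfl]
    dsimp [phi]
    rw [aH_cast H (show m+1+1-1 = m+1 by omega), aH_cast H (show m+1-1 = m by omega),
        pH_cast H (show m+1+1-1 = m+1 by omega)]
    simp only [assoc, eqToHom_trans, eqToHom_trans_assoc, eqToHom_refl, id_comp, comp_id,
      Preadditive.comp_neg, Preadditive.neg_comp, Preadditive.comp_add, Preadditive.add_comp]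
    rw [eI H α hα m]
    abel

noncomputable def homotopyG (H : Homotopy h 0) {f : X ⟶ X'} {g : Y ⟶ Y'}
    (α : ∀ n : ℤ, X.X (n+1) ⟶ Y'.X n)
    (hα : ∀ n : ℤ, h.f n = biprod.desc (biprod.lift (f.f (n+1)) (α n)) (biprod.lift 0 (g.f n))) :
    Homotopy g (phi H α hα ≫ u') where
  hom i j := if e : j + 1 = i then
      eqToHom (congrArg Y.X (show i = j + 1 by omega)) ≫ tH H j
    else 0
  zero i j w := dif_neg w
  comm i := by
    obtain ⟨m, rfl⟩ : ∃ m, i = m + 1 := ⟨i - 1, by omega⟩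
    rw [dNext_eq _ (show (ComplexShape.up ℤ).Rel (m+1) (m+1+1) from rfl),
        prevD_eq _ (show (ComplexShape.up ℤ).Rel m (m+1) from rfl)]
    rw [dif_pos rfl, dif_pos rfl]
    dsimp [phi]
    rw [pH_cast H (show m+1-1 = m by omega)]
    simp only [assoc, eqToHom_trans, eqToHom_trans_assoc, eqToHom_refl, id_comp, comp_id]
    rw [eIV H α hα m]
    abel

end Components

end ForPaper

open ForPaper

/-- If some good map `Cone(u) ⟶ Cone(u')` relative to `(f, g)` is null-homotopic, then
the square `(f, g)` is null-homotopic: there is a chain map `φ : Y ⟶ X'` with `f`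
homotopic to `φ ∘ u` and `g` homotopic to `u' ∘ φ`. -/
theorem statement_7 {𝒜 : Type*} [Category 𝒜] [Preadditive 𝒜] [HasBinaryBiproducts 𝒜]
    {X Y X' Y' : CochainComplex 𝒜 ℤ} (u : X ⟶ Y) (u' : X' ⟶ Y')
    (f : X ⟶ X') (g : Y ⟶ Y') (h : cone u ⟶ cone u')
    (hgood : IsGood u u' f g h) (hnull : Nonempty (Homotopy h 0)) :
    ∃ φ : Y ⟶ X', Nonempty (Homotopy f (u ≫ φ)) ∧ Nonempty (Homotopy g (φ ≫ u')) := by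
  obtain ⟨α, hα⟩ := hgood
  obtain ⟨H⟩ := hnull
  exact ⟨phi H α hα, ⟨homotopyF H α hα⟩, ⟨homotopyG H α hα⟩⟩
end

section
/- Let 𝒜 be an additive category and let u : X → Y, u' : X' → Y' be chain maps of cochain complexes over 𝒜. Let g : Y → Y' and h : Cone(u) → Cone(u') be chain maps such that h ∘ v is chain homotopic to v' ∘ g, where v : Y → Cone(u) and v' : Y' → Cone(u') are the canonical inclusions. Then there exist chain maps f : X → X' and g' : Y → Y' with g' chain homotopic to g, and a chain map h' : Cone(u) → Cone(u') that is good relative to (f, g') and is chain homotopic to h. -/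
open CategoryTheory Category Limits

open ForPaper

section Aux

open ForPaper

variable {𝒜 : Type*} [Category 𝒜] [Preadditive 𝒜] [HasBinaryBiproducts 𝒜]
variable {X Y X' Y' : CochainComplex 𝒜 ℤ}

/-- Transport a family of maps `F n : X (n+1) ⟶ X' (n+1)` along an index equality. -/
lemma F_congr (F : ∀ n : ℤ, X.X (n + 1) ⟶ X'.X (n + 1)) {p q : ℤ} (hpq : p = q)
    (e1 : X.X (q + 1) = X.X (p + 1)) (e2 : X'.X (p + 1) = X'.X (q + 1)) :
    eqToHom e1 ≫ F p ≫ eqToHom e2 = F q := by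
  subst hpq; simp

lemma Fcomm2 (F : ∀ n : ℤ, X.X (n + 1) ⟶ X'.X (n + 1))
    (hF : ∀ n : ℤ, F n ≫ X'.d (n + 1) (n + 1 + 1) = X.d (n + 1) (n + 1 + 1) ≫ F (n + 1))
    (a b : ℤ) (h1 : a - 1 + 1 = a) (h2 : b - 1 + 1 = b) (hab : a + 1 = b) :
    (eqToHom (congrArg X.X h1.symm) ≫ F (a - 1) ≫ eqToHom (congrArg X'.X h1)) ≫ X'.d a b =
      X.d a b ≫ (eqToHom (congrArg X.X h2.symm) ≫ F (b - 1) ≫ eqToHom (congrArg X'.X h2)) := by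
  subst hab
  revert h1 h2
  generalize a - 1 = p
  generalize a + 1 - 1 = q
  intro h1 h2
  obtain rfl := h1
  obtain rfl : q = p + 1 := by omega
  simp only [eqToHom_refl, Category.comp_id, Category.id_comp]
  exact hF p

end Aux

/-- Given chain maps `g : Y ⟶ Y'` and `h : Cone(u) ⟶ Cone(u')` such that `h ∘ v` is
homotopic to `v' ∘ g` (where `v`, `v'` are the canonical inclusions), there are chain
maps `f : X ⟶ X'` and `g' : Y ⟶ Y'` with `g'` homotopic to `g`, and a chain map
`h' : Cone(u) ⟶ Cone(u')`, homotopic to `h`, which is good relative to `(f, g')`. -/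
theorem statement_8 {𝒜 : Type*} [Category 𝒜] [Preadditive 𝒜] [HasBinaryBiproducts 𝒜]
    {X Y X' Y' : CochainComplex 𝒜 ℤ} (u : X ⟶ Y) (u' : X' ⟶ Y')
    (g : Y ⟶ Y') (h : cone u ⟶ cone u')
    (hcomm : Nonempty (Homotopy (coneIn u ≫ h) (g ≫ coneIn u'))) :
    ∃ (f : X ⟶ X') (g' : Y ⟶ Y') (h' : cone u ⟶ cone u'),
      Nonempty (Homotopy g' g) ∧ IsGood u u' f g' h' ∧ Nonempty (Homotopy h' h) := by
  obtain ⟨k⟩ := hcomm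
  -- the correcting null-homotopic map
  set K : ∀ i j : ℤ, (cone u).X i ⟶ (cone u').X j :=
    fun i j => -(biprod.snd ≫ k.hom i j) with hK
  have hKzero : ∀ i j, ¬ (ComplexShape.up ℤ).Rel j i → K i j = 0 := by
    intro i j hij
    simp [hK, k.zero i j hij]; rfl
  set N : cone u ⟶ cone u' := Homotopy.nullHomotopicMap K with hN
  set h' : cone u ⟶ cone u' := h + N with hh'
  have hom_h' : Nonempty (Homotopy h' h) := by
    refine ⟨Homotopy.equivSubZero.symm ?_⟩
    have e : h' - h = N := by rw [hh']; abel
    rw [e]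
    exact Homotopy.nullHomotopy K hKzero
  -- the second column of h' is (0, g)
  have key : ∀ n : ℤ, (biprod.inr : Y.X n ⟶ (cone u).X n) ≫ h'.f n
      = biprod.lift 0 (g.f n) := by
    intro n
    have hc := k.comm n
    rw [dNext_eq k.hom (show (ComplexShape.up ℤ).Rel n (n + 1) by simp),
      prevD_eq k.hom (show (ComplexShape.up ℤ).Rel (n - 1) n by
        simp only [ComplexShape.up_Rel]; omega)] at hc
    simp only [HomologicalComplex.comp_f, coneIn] at hc
    have e1 : (biprod.inr : Y.X n ⟶ (cone u).X n) ≫ dNext n K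
        = -(Y.d n (n + 1) ≫ k.hom (n + 1) n) := by
      rw [dNext_eq K (show (ComplexShape.up ℤ).Rel n (n + 1) by simp)]
      simp only [hK, cone_d]
      erw [biprod.inr_desc_assoc, Preadditive.comp_neg, biprod.lift_snd_assoc]
    have e2 : (biprod.inr : Y.X n ⟶ (cone u).X n) ≫ prevD n K
        = -(k.hom n (n - 1) ≫ (cone u').d (n - 1) n) := by
      rw [prevD_eq K (show (ComplexShape.up ℤ).Rel (n - 1) n by
        simp only [ComplexShape.up_Rel]; omega)]
      simp only [hK]
      erw [Preadditive.neg_comp, Preadditive.comp_neg, Category.assoc, biprod.inr_snd_assoc]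
    have e3 : h'.f n = h.f n + (dNext n K + prevD n K) := by
      rw [hh']; rfl
    have e4 : biprod.lift (0 : Y.X n ⟶ X'.X (n + 1)) (g.f n) = g.f n ≫ biprod.inr := by
      apply biprod.hom_ext <;> simp
    erw [e3, e4, Preadditive.comp_add, Preadditive.comp_add, e1, e2, hc]
    abel
  have key_fst : ∀ n : ℤ, (biprod.inr : Y.X n ⟶ (cone u).X n) ≫ h'.f n ≫
      (biprod.fst : (cone u').X n ⟶ X'.X (n + 1)) = 0 := by
    intro n
    erw [← Category.assoc, key n]
    exact biprod.lift_fst _ _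
  -- the upper-left entries of h'
  set F : ∀ n : ℤ, X.X (n + 1) ⟶ X'.X (n + 1) :=
    fun n => biprod.inl ≫ h'.f n ≫ biprod.fst with hFdef
  have Fcomm : ∀ n : ℤ, F n ≫ X'.d (n + 1) (n + 1 + 1)
      = X.d (n + 1) (n + 1 + 1) ≫ F (n + 1) := by
    intro n
    have d_fst : (cone u').d n (n + 1) ≫ (biprod.fst : (cone u').X (n + 1) ⟶ X'.X (n + 1 + 1))
        = biprod.fst ≫ (-(X'.d (n + 1) (n + 1 + 1))) := by
      apply biprod.hom_ext' <;> simp <;>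
        first
        | (erw [biprod.inl_desc_assoc, biprod.lift_fst]; done)
        | (erw [biprod.inr_desc_assoc, biprod.lift_fst]; done)
    have e : biprod.inl ≫ h'.f n ≫ (cone u').d n (n + 1) ≫ biprod.fst
        = biprod.inl ≫ (cone u).d n (n + 1) ≫ h'.f (n + 1) ≫ biprod.fst := by
      erw [HomologicalComplex.Hom.comm_assoc]; rfl
    rw [d_fst] at e
    erw [cone_d, biprod.inl_desc_assoc, biprod.lift_eq] at e
    simp only [Preadditive.add_comp, Preadditive.neg_comp, Category.assoc, key_fst,
      Preadditive.comp_neg, comp_zero, add_zero] at e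
    have e2 : (-(X.d (n + 1) (n + 1 + 1) ≫ biprod.inl) + u.f (n + 1) ≫ biprod.inr) ≫
        h'.f (n + 1) ≫ (biprod.fst : (cone u').X (n + 1) ⟶ X'.X (n + 1 + 1))
        = -(X.d (n + 1) (n + 1 + 1) ≫ biprod.inl ≫ h'.f (n + 1) ≫ biprod.fst) := by
      erw [Preadditive.add_comp, Category.assoc (u.f (n + 1)), key_fst, comp_zero, add_zero,
        Preadditive.neg_comp]
      congr 1
      exact Category.assoc _ _ _
    have e3 : (biprod.inl : X.X (n + 1) ⟶ (cone u).X n) ≫ h'.f n ≫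
        (-(biprod.fst ≫ X'.d (n + 1) (n + 1 + 1)))
        = -(biprod.inl ≫ h'.f n ≫ biprod.fst ≫ X'.d (n + 1) (n + 1 + 1)) := by
      erw [Preadditive.comp_neg, Preadditive.comp_neg]; rfl
    replace e := e3.symm.trans (e.trans e2)
    simp only [hFdef]
    refine Eq.trans ?_ (neg_injective e)
    erw [Category.assoc, Category.assoc]
  -- the chain map f
  refine ⟨⟨fun m => eqToHom (congrArg X.X (show m = m - 1 + 1 by omega)) ≫ F (m - 1) ≫
        eqToHom (congrArg X'.X (show m - 1 + 1 = m by omega)), ?_⟩,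
    g, h', ⟨Homotopy.refl g⟩, ?_, hom_h'⟩
  · rintro i j (hij : i + 1 = j)
    exact Fcomm2 F Fcomm i j (by omega) (by omega) hij
  refine ⟨fun n => biprod.inl ≫ h'.f n ≫ biprod.snd, fun n => ?_⟩
  apply biprod.hom_ext'
  · erw [biprod.inl_desc]
    apply biprod.hom_ext
    · simp only [Category.assoc, biprod.lift_fst]
      erw [Category.assoc]
      exact (F_congr F (show n + 1 - 1 = n by omega)
        (congrArg X.X (show n + 1 = n + 1 - 1 + 1 by omega))
        (congrArg X'.X (show n + 1 - 1 + 1 = n + 1 by omega))).symm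
    · simp
      exact Category.assoc _ _ _
  · erw [biprod.inr_desc]
    exact key n
end
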